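/- For each s, let g_s : 𝔹^s → 𝔹^{2^s} be the transformation sending v to the tuple of all subset-XORs (⊕_{i∈T} v_i)_{T ⊆ {1,…,s}} (with the empty XOR equal to 0). There exists a family of reversible circuits (S_s) consisting only of CNOT gates and a sequence q(s) such that S_s implements g_s with q(s) additional inputs and, as s → ∞, L(S_s) ~ 2^{s+1} and q(s) ~ 2^s. -/

import Mathlib

open Filter

namespace Rev

/-- A reversible gate `TOF(I; t)` on `N` lines: a control set `I` with `|I| ≤ 2`
and a target `t ∉ I`.  `|I| = 0, 1, 2` correspond to NOT, CNOT, C²NOT. -/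
structure Gate (N : ℕ) where
  I : Finset (Fin N)
  t : Fin N
  card_le : I.card ≤ 2
  t_not_mem : t ∉ I

/-- The transformation computed by a gate: the target coordinate is XORed with the
conjunction of the control coordinates (the empty conjunction is `1`). -/
def Gate.apply {N : ℕ} (g : Gate N) (x : Fin N → Bool) : Fin N → Bool :=
  fun j => if j = g.t then xor (x g.t) (decide (∀ i ∈ g.I, x i = true)) else x j

/-- A reversible circuit: a finite sequence (composition) of gates. -/
abbrev Circuit (N : ℕ) := List (Gate N)

/-- The transformation computed by a circuit (composition of the gate maps). -/
def Circuit.eval {N : ℕ} (S : Circuit N) (x : Fin N → Bool) : Fin N → Bool :=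
  S.foldl (fun v g => g.apply v) x

/-- Gate complexity: the number of gates. -/
def Circuit.L {N : ℕ} (S : Circuit N) : ℕ := S.length

/-- The number of NOT and CNOT gates. -/
def Circuit.LC {N : ℕ} (S : Circuit N) : ℕ := (S.filter fun g => g.I.card ≤ 1).length

/-- The number of C²NOT (Toffoli) gates. -/
def Circuit.LT {N : ℕ} (S : Circuit N) : ℕ := (S.filter fun g => g.I.card = 2).length

/-- The quantum weight, given weights `WC` for NOT/CNOT gates and `WT` for C²NOT gates. -/
noncomputable def Circuit.W {N : ℕ} (WC WT : ℝ) (S : Circuit N) : ℝ :=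
  WC * S.LC + WT * S.LT

/-- A circuit has depth one if the sets `{t} ∪ I` of its gates are pairwise disjoint. -/
def DepthOne {N : ℕ} (S : Circuit N) : Prop :=
  S.Pairwise fun g₁ g₂ => Disjoint (insert g₁.t g₁.I) (insert g₂.t g₂.I)

/-- The depth of a circuit: the minimal number of depth-one sub-circuits whose
concatenation is the circuit. -/
noncomputable def Circuit.D {N : ℕ} (S : Circuit N) : ℕ :=
  sInf {d | ∃ parts : List (Circuit N),
    parts.length = d ∧ parts.flatten = S ∧ ∀ p ∈ parts, DepthOne p}

/-- Padding an input vector with zero values on `q` additional inputs. -/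
def pad {n q : ℕ} (x : Fin n → Bool) : Fin (n + q) → Bool :=
  fun i => if h : (i : ℕ) < n then x ⟨i, h⟩ else false

/-- A circuit `S` with `n + q` inputs implements `f : 𝔹ⁿ → 𝔹ᵐ` with `q` additional
inputs: there is a permutation `π` of the output positions such that for every `x`,
applying `S` to `⟨x, 0, …, 0⟩` and permuting the coordinates by `π` yields a vector
whose first `m` coordinates equal `f x`. -/
def Implements {n q m : ℕ} (S : Circuit (n + q)) (f : (Fin n → Bool) → Fin m → Bool) :
    Prop :=
  m ≤ n + q ∧ ∃ π : Equiv.Perm (Fin (n + q)), ∀ x : Fin n → Bool, ∀ j : Fin m,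
    ∀ hj : (j : ℕ) < n + q, Circuit.eval S (pad x) (π ⟨j, hj⟩) = f x j

/-- `f ∈ F(n, q)`: `f : 𝔹ⁿ → 𝔹ⁿ` is implementable with `q` additional inputs. -/
def Implementable (n q : ℕ) (f : (Fin n → Bool) → Fin n → Bool) : Prop :=
  ∃ S : Circuit (n + q), Implements S f

/-- `L(f, q)`: minimal gate complexity of a circuit implementing `f` with `q`
additional inputs. -/
noncomputable def Lmin (n q : ℕ) (f : (Fin n → Bool) → Fin n → Bool) : ℕ :=
  sInf {l | ∃ S : Circuit (n + q), Implements S f ∧ S.L = l}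

/-- The Shannon gate complexity function `L(n, q)`. -/
noncomputable def Lsh (n q : ℕ) : ℕ :=
  sSup {l | ∃ f, Implementable n q f ∧ Lmin n q f = l}

/-- `D(f, q)`: minimal depth of a circuit implementing `f` with `q` additional inputs. -/
noncomputable def Dmin (n q : ℕ) (f : (Fin n → Bool) → Fin n → Bool) : ℕ :=
  sInf {d | ∃ S : Circuit (n + q), Implements S f ∧ S.D = d}

/-- The Shannon depth function `D(n, q)`. -/
noncomputable def Dsh (n q : ℕ) : ℕ :=
  sSup {d | ∃ f, Implementable n q f ∧ Dmin n q f = d}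

/-- `W(f, q)`: minimal quantum weight of a circuit implementing `f` with `q`
additional inputs. -/
noncomputable def Wmin (WC WT : ℝ) (n q : ℕ) (f : (Fin n → Bool) → Fin n → Bool) : ℝ :=
  sInf {w | ∃ S : Circuit (n + q), Implements S f ∧ Circuit.W WC WT S = w}

/-- The Shannon quantum weight function `W(n, q)`. -/
noncomputable def Wsh (WC WT : ℝ) (n q : ℕ) : ℝ :=
  sSup {w | ∃ f, Implementable n q f ∧ Wmin WC WT n q f = w}

/-- `a ~ b`: `a n / b n → 1`. -/
def AsympEquiv (a b : ℕ → ℝ) : Prop :=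
  Tendsto (fun n => a n / b n) atTop (nhds 1)

/-- `a ≲ b`: `limsup (a n / b n) ≤ 1`. -/
def AsympLE (a b : ℕ → ℝ) : Prop :=
  Filter.limsup (fun n => a n / b n) atTop ≤ 1

/-- A growing function: nondecreasing and tending to `+∞`. -/
def Growing (φ : ℕ → ℝ) : Prop :=
  Monotone φ ∧ Tendsto φ atTop atTop

/-- `2 ^ (n - ⌈n / φ(n)⌉)` as a real number. -/
noncomputable def pow2e (φ : ℕ → ℝ) (n : ℕ) : ℝ :=
  (2 : ℝ) ^ ((n : ℤ) - ⌈(n : ℝ) / φ n⌉)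

end Rev

namespace Rev

/-- `g_s : 𝔹ˢ → 𝔹^{2ˢ}`: the tuple of all subset-XORs `⊕_{i ∈ T} v_i`, the index
`j : Fin (2 ^ s)` encoding the subset `T ⊆ {1, …, s}` via its binary digits. -/
def subsetXorAll (s : ℕ) : (Fin s → Bool) → Fin (2 ^ s) → Bool :=
  fun v j => decide ((Finset.univ.filter
    fun i : Fin s => (j : ℕ).testBit i.val = true ∧ v i = true).card % 2 = 1)


/-- A CNOT gate with control `c` and target `t`. -/
def cnot {N : ℕ} (c t : Fin N) (h : c ≠ t) : Gate N :=
  ⟨{c}, t, by simp, by simp [Ne.symm h]⟩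

lemma cnot_apply_at {N : ℕ} (c t : Fin N) (h : c ≠ t) (v : Fin N → Bool) (i : Fin N) :
    (cnot c t h).apply v i = if (i : ℕ) = (t : ℕ) then xor (v t) (v c) else v i := by
  have hd : (decide (∀ j ∈ ({c} : Finset (Fin N)), v j = true)) = v c := by simp
  by_cases hi : i = t
  · have hiv : (i : ℕ) = (t : ℕ) := congrArg Fin.val hi
    simp only [Gate.apply, cnot, hd, if_pos hi, if_pos hiv]
    simp [hi]
  · have hiv : ¬ ((i : ℕ) = (t : ℕ)) := fun hh => hi (Fin.ext hh)
    simp only [Gate.apply, cnot, hd, if_neg hi, if_neg hiv]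
    simp [hi]

/-- The gates producing the subset-XOR on ancilla line `s + j`. -/
def gs (s : ℕ) (j : ℕ) : Circuit (s + 2 ^ s) :=
  if h : 0 < j ∧ j < 2 ^ s then
    [cnot ⟨s + (j - 2 ^ Nat.log 2 j), by
          have := h.2
          have hp : 0 < 2 ^ Nat.log 2 j := Nat.pow_pos (by norm_num)
          omega⟩
        ⟨s + j, by have := h.2; omega⟩
        (by
          have h1 : 0 < 2 ^ Nat.log 2 j := Nat.pow_pos (by norm_num)
          have hple := Nat.pow_log_le_self 2 h.1.ne'
          have := h.1
          simp only [ne_eq, Fin.mk.injEq]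
          omega),
     cnot ⟨Nat.log 2 j, by have := Nat.log_lt_of_lt_pow (b := 2) h.1.ne' h.2; omega⟩
        ⟨s + j, by have := h.2; omega⟩
        (by
          have h1 : Nat.log 2 j < s := Nat.log_lt_of_lt_pow h.1.ne' h.2
          simp only [ne_eq, Fin.mk.injEq]
          omega)]
  else []

/-- The full circuit computing all subset-XORs. -/
def circ (s : ℕ) : Circuit (s + 2 ^ s) := (List.range (2 ^ s)).flatMap (gs s)

/-- The intended state after the first `k` stages. -/
def stFun (s : ℕ) (x : Fin s → Bool) (k : ℕ) : Fin (s + 2 ^ s) → Bool :=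
  fun i => if hi : (i : ℕ) < s then x ⟨i, hi⟩
    else if (i : ℕ) - s ≤ k then
      subsetXorAll s x ⟨(i : ℕ) - s, by have := i.isLt; omega⟩
    else false

lemma stFun_lo (s : ℕ) (x : Fin s → Bool) (k : ℕ) (i : Fin (s + 2 ^ s))
    (h : (i : ℕ) < s) : stFun s x k i = x ⟨i, h⟩ := by
  simp only [stFun, dif_pos h]

lemma stFun_mid (s : ℕ) (x : Fin s → Bool) (k : ℕ) (i : Fin (s + 2 ^ s))
    (h1 : ¬ (i : ℕ) < s) (h2 : (i : ℕ) - s ≤ k) (j : Fin (2 ^ s))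
    (hj : (j : ℕ) = (i : ℕ) - s) :
    stFun s x k i = subsetXorAll s x j := by
  simp only [stFun, dif_neg h1, if_pos h2]
  congr 1
  exact Fin.ext hj.symm

lemma stFun_hi (s : ℕ) (x : Fin s → Bool) (k : ℕ) (i : Fin (s + 2 ^ s))
    (h1 : ¬ (i : ℕ) < s) (h2 : ¬ (i : ℕ) - s ≤ k) : stFun s x k i = false := by
  simp only [stFun, dif_neg h1, if_neg h2]

lemma subsetXor_zero (s : ℕ) (x : Fin s → Bool) (h : 0 < 2 ^ s) :
    subsetXorAll s x ⟨0, h⟩ = false := by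
  simp [subsetXorAll, Nat.zero_testBit]

lemma subsetXor_succ (s : ℕ) (x : Fin s → Bool) (j : ℕ) (h0 : 0 < j) (h2 : j < 2 ^ s)
    (hL : Nat.log 2 j < s) (hj' : j - 2 ^ Nat.log 2 j < 2 ^ s) :
    subsetXorAll s x ⟨j, h2⟩ =
      xor (subsetXorAll s x ⟨j - 2 ^ Nat.log 2 j, hj'⟩) (x ⟨Nat.log 2 j, hL⟩) := by
  set L := Nat.log 2 j with hLdef
  set j' := j - 2 ^ L with hj'def
  have hple : 2 ^ L ≤ j := Nat.pow_log_le_self 2 h0.ne'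
  have hlt : j < 2 ^ (L + 1) := Nat.lt_pow_succ_log_self (by norm_num) j
  have hj'lt : j' < 2 ^ L := by
    have hh : 2 ^ (L + 1) = 2 ^ L + 2 ^ L := by ring
    omega
  have hjeq : j = 2 ^ L + j' := by omega
  have htb : ∀ i : Fin s, (j.testBit i.val = true ∧ x i = true) ↔
      ((j'.testBit i.val = true ∧ x i = true) ∨ (i = ⟨L, hL⟩ ∧ x i = true)) := by
    intro i
    rcases lt_trichotomy i.val L with hc | hc | hc
    · rw [hjeq, Nat.testBit_two_pow_add_gt hc]
      constructor
      · intro hh; exact Or.inl hh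
      · rintro (hh | hh)
        · exact hh
        · exact absurd (congrArg Fin.val hh.1) (by simp only; omega)
    · have h1 : j.testBit L = true := by
        rw [hjeq, Nat.testBit_two_pow_add_eq, Nat.testBit_lt_two_pow hj'lt]
        rfl
      have hb2 : j'.testBit L = false := Nat.testBit_lt_two_pow hj'lt
      have h3 : i = ⟨L, hL⟩ := by apply Fin.ext; exact hc
      rw [h3]
      simp only [Fin.val_mk] at h1 hb2 ⊢
      simp [h1, hb2]
    · have h1 : j.testBit i.val = false :=
        Nat.testBit_lt_two_pow (lt_of_lt_of_le hlt (Nat.pow_le_pow_right (by norm_num) hc))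
      have hb2 : j'.testBit i.val = false :=
        Nat.testBit_lt_two_pow (lt_trans hj'lt (Nat.pow_lt_pow_right (by norm_num) hc))
      have h3 : i ≠ ⟨L, hL⟩ := by
        intro hh
        exact absurd (congrArg Fin.val hh) (by simp only; omega)
      simp [h1, hb2, h3]
  have hfilt : (Finset.univ.filter fun i : Fin s => j.testBit i.val = true ∧ x i = true)
      = (Finset.univ.filter fun i : Fin s => j'.testBit i.val = true ∧ x i = true)
        ∪ (Finset.univ.filter fun i : Fin s => i = ⟨L, hL⟩ ∧ x i = true) := by
    rw [← Finset.filter_or]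
    exact Finset.filter_congr fun i _ => by
      constructor
      · exact fun h => (htb i).mp h
      · exact fun h => (htb i).mpr h
  have hdisj : Disjoint
      (Finset.univ.filter fun i : Fin s => j'.testBit i.val = true ∧ x i = true)
      (Finset.univ.filter fun i : Fin s => i = ⟨L, hL⟩ ∧ x i = true) := by
    rw [Finset.disjoint_left]
    intro a ha hb
    simp only [Finset.mem_filter] at ha hb
    rw [hb.2.1] at ha
    have hfz := Nat.testBit_lt_two_pow (x := j') (i := L) hj'lt
    rw [Fin.val_mk] at ha
    rw [hfz] at ha
    exact absurd ha.2.1 (by simp)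
  have hcard2 : (Finset.univ.filter fun i : Fin s => i = ⟨L, hL⟩ ∧ x i = true).card
      = if x ⟨L, hL⟩ = true then 1 else 0 := by
    by_cases hx : x ⟨L, hL⟩ = true
    · have heq : (Finset.univ.filter fun i : Fin s => i = ⟨L, hL⟩ ∧ x i = true)
          = {⟨L, hL⟩} := by
        apply Finset.ext; intro a
        simp only [Finset.mem_filter, Finset.mem_singleton, Finset.mem_univ, true_and]
        constructor
        · exact fun h => h.1
        · intro h; exact ⟨h, by rw [h]; exact hx⟩
      rw [heq]; simp [hx]
    · have heq : (Finset.univ.filter fun i : Fin s => i = ⟨L, hL⟩ ∧ x i = true)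
          = ∅ := by
        apply Finset.ext; intro a
        simp only [Finset.mem_filter, Finset.notMem_empty, iff_false, not_and]
        intro _ ha hxa
        exact hx (ha ▸ hxa)
      rw [heq]; simp [hx]
  have hcard : (Finset.univ.filter fun i : Fin s => j.testBit i.val = true ∧ x i = true).card
      = (Finset.univ.filter fun i : Fin s => j'.testBit i.val = true ∧ x i = true).card
        + (if x ⟨L, hL⟩ = true then 1 else 0) := by
    rw [hfilt, Finset.card_union_of_disjoint hdisj, hcard2]
  have main : ∀ c c' : ℕ, c = c' + (if x ⟨L, hL⟩ = true then 1 else 0) →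
      decide (c % 2 = 1) = xor (decide (c' % 2 = 1)) (x ⟨L, hL⟩) := by
    intro c c' hcc
    by_cases hx : x ⟨L, hL⟩ = true
    · rw [if_pos hx] at hcc
      rw [hx, Bool.xor_true]
      rcases Nat.mod_two_eq_zero_or_one c' with hp | hp
      · have hq : c % 2 = 1 := by omega
        simp [hp, hq]
      · have hq : c % 2 = 0 := by omega
        simp [hp, hq]
    · have hx' : x ⟨L, hL⟩ = false := by
        revert hx; cases x ⟨L, hL⟩ <;> simp
      rw [if_neg hx] at hcc
      rw [hx', Bool.xor_false, hcc]
      simp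
  exact main _ _ hcard

lemma eval_append {N : ℕ} (A B : Circuit N) (v : Fin N → Bool) :
    Circuit.eval (A ++ B) v = Circuit.eval B (Circuit.eval A v) := by
  simp [Circuit.eval, List.foldl_append]

lemma eval_prefix (s : ℕ) (x : Fin s → Bool) :
    ∀ k, k < 2 ^ s →
      Circuit.eval ((List.range (k + 1)).flatMap (gs s)) (pad x) = stFun s x k := by
  have h2s : 0 < 2 ^ s := Nat.pow_pos (by norm_num)
  intro k
  induction k with
  | zero =>
    intro hk
    have hg : gs s 0 = [] := by simp [gs]
    have hr : List.range 1 = [0] := rfl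
    rw [hr]
    simp only [List.flatMap_cons, List.flatMap_nil, hg, List.nil_append]
    funext i
    simp only [Circuit.eval, List.foldl_nil, stFun, pad]
    by_cases hi : (i : ℕ) < s
    · simp [hi]
    · rw [dif_neg hi, dif_neg hi]
      by_cases hz : (i : ℕ) - s ≤ 0
      · rw [if_pos hz]
        have hiz : (i : ℕ) - s = 0 := by omega
        rw [show (⟨(i : ℕ) - s, by have := i.isLt; omega⟩ : Fin (2 ^ s))
            = ⟨0, h2s⟩ from Fin.ext hiz]
        rw [subsetXor_zero]
      · rw [if_neg hz]
  | succ k ih =>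
    intro hk
    have hk' : k < 2 ^ s := by omega
    rw [List.range_succ, List.flatMap_append, eval_append, ih hk']
    have hcond : 0 < k + 1 ∧ k + 1 < 2 ^ s := ⟨Nat.succ_pos k, hk⟩
    rw [show ([k + 1] : List ℕ).flatMap (gs s) = gs s (k + 1) by simp]
    rw [gs, dif_pos hcond]
    have hLs : Nat.log 2 (k + 1) < s := Nat.log_lt_of_lt_pow hcond.1.ne' hcond.2
    have hple : 2 ^ Nat.log 2 (k + 1) ≤ k + 1 := Nat.pow_log_le_self 2 hcond.1.ne'
    have h2L : 0 < 2 ^ Nat.log 2 (k + 1) := Nat.pow_pos (by norm_num)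
    have hj's : k + 1 - 2 ^ Nat.log 2 (k + 1) < 2 ^ s := by omega
    funext i
    simp only [Circuit.eval, List.foldl_cons, List.foldl_nil]
    rw [cnot_apply_at, cnot_apply_at, cnot_apply_at, cnot_apply_at]
    simp only [Fin.val_mk]
    by_cases hit : (i : ℕ) = s + (k + 1)
    · rw [if_pos hit]
      simp only [eq_self_iff_true, if_true]
      rw [if_neg (show ¬ Nat.log 2 (k + 1) = s + (k + 1) by omega)]
      rw [stFun_hi s x k _ (by simp only [Fin.val_mk]; omega)
        (by simp only [Fin.val_mk]; omega)]
      rw [stFun_mid s x k _ (by simp only [Fin.val_mk]; omega)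
        (by simp only [Fin.val_mk]; omega)
        ⟨k + 1 - 2 ^ Nat.log 2 (k + 1), hj's⟩ (by simp only [Fin.val_mk]; omega)]
      rw [stFun_lo s x k _ (by simp only [Fin.val_mk]; exact hLs)]
      rw [stFun_mid s x (k + 1) i (by omega) (by omega) ⟨k + 1, hk⟩ (by simp only [Fin.val_mk]; omega)]
      rw [Bool.false_xor]
      rw [subsetXor_succ s x (k + 1) hcond.1 hcond.2 hLs hj's]
    · rw [if_neg hit, if_neg hit]
      by_cases his : (i : ℕ) < s
      · rw [stFun_lo s x k i his, stFun_lo s x (k + 1) i his]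
      · by_cases hle : (i : ℕ) - s ≤ k
        · rw [stFun_mid s x k i his hle ⟨(i : ℕ) - s, by have := i.isLt; omega⟩ rfl,
            stFun_mid s x (k + 1) i his (by omega) ⟨(i : ℕ) - s, by have := i.isLt; omega⟩ rfl]
        · rw [stFun_hi s x k i his hle, stFun_hi s x (k + 1) i his (by omega)]

lemma circ_eval (s : ℕ) (x : Fin s → Bool) :
    Circuit.eval (circ s) (pad x) = stFun s x (2 ^ s - 1) := by
  have h2s : 0 < 2 ^ s := Nat.pow_pos (by norm_num)
  have h : List.range (2 ^ s) = List.range ((2 ^ s - 1) + 1) := by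
    congr 1
    omega
  show Circuit.eval ((List.range (2 ^ s)).flatMap (gs s)) (pad x) = stFun s x (2 ^ s - 1)
  rw [h]
  exact eval_prefix s x (2 ^ s - 1) (by omega)

lemma gs_length (s j : ℕ) : (gs s j).length = if 0 < j ∧ j < 2 ^ s then 2 else 0 := by
  by_cases h : 0 < j ∧ j < 2 ^ s
  · rw [gs, dif_pos h, if_pos h]
    rfl
  · rw [gs, dif_neg h, if_neg h]
    rfl

lemma circ_length (s : ℕ) : (circ s).L = 2 * (2 ^ s - 1) := by
  have key : ∀ n, n ≤ 2 ^ s → ((List.range n).flatMap (gs s)).length = 2 * (n - 1) := by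
    intro n
    induction n with
    | zero => intro _; simp
    | succ n ih =>
      intro hn
      rw [List.range_succ, List.flatMap_append, List.length_append, ih (by omega)]
      rw [show ([n] : List ℕ).flatMap (gs s) = gs s n by simp]
      rw [gs_length]
      by_cases h : 0 < n ∧ n < 2 ^ s
      · rw [if_pos h]
        omega
      · have hn0 : n = 0 := by omega
        rw [if_neg h, hn0]
  exact key (2 ^ s) le_rfl

/-- All `2ˢ` subset-XORs of `s` variables can be implemented by reversible circuits
`S_s` consisting only of CNOT gates, with `q s` additional inputs, where
`L(S_s) ~ 2^{s+1}` and `q s ~ 2ˢ`. -/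
theorem subset_xors_complexity :
    ∃ (q : ℕ → ℕ) (S : ∀ s, Circuit (s + q s)),
      (∀ s, (∀ g ∈ S s, g.I.card = 1) ∧ Implements (S s) (subsetXorAll s)) ∧
      AsympEquiv (fun s => ((S s).L : ℝ)) (fun s => (2 : ℝ) ^ (s + 1)) ∧
      AsympEquiv (fun s => (q s : ℝ)) (fun s => (2 : ℝ) ^ s) := by
  classical
  refine ⟨fun s => 2 ^ s, fun s => circ s, ?_, ?_, ?_⟩
  · intro s
    have h2s : 0 < 2 ^ s := Nat.pow_pos (by norm_num)
    constructor
    · intro g hg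
      have hg' : g ∈ (List.range (2 ^ s)).flatMap (gs s) := hg
      rw [List.mem_flatMap] at hg'
      obtain ⟨j, _, hgj⟩ := hg'
      rw [gs] at hgj
      by_cases h : 0 < j ∧ j < 2 ^ s
      · rw [dif_pos h] at hgj
        simp only [List.mem_cons, List.not_mem_nil, or_false] at hgj
        rcases hgj with rfl | rfl <;> simp [cnot]
      · rw [dif_neg h] at hgj
        exact absurd hgj List.not_mem_nil
    · refine ⟨Nat.le_add_left _ _, ?_⟩
      have hN : 0 < s + 2 ^ s := by omega
      refine ⟨{ toFun := fun i => ⟨((i : ℕ) + s) % (s + 2 ^ s), Nat.mod_lt _ hN⟩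
                invFun := fun i => ⟨((i : ℕ) + 2 ^ s) % (s + 2 ^ s), Nat.mod_lt _ hN⟩
                left_inv := ?_
                right_inv := ?_ }, ?_⟩
      · intro i
        apply Fin.ext
        simp only [Fin.val_mk]
        rw [Nat.mod_add_mod]
        have hre : (i : ℕ) + s + 2 ^ s = (i : ℕ) + (s + 2 ^ s) := by omega
        rw [hre, Nat.add_mod_right]
        exact Nat.mod_eq_of_lt i.isLt
      · intro i
        apply Fin.ext
        simp only [Fin.val_mk]
        rw [Nat.mod_add_mod]
        have hre : (i : ℕ) + 2 ^ s + s = (i : ℕ) + (s + 2 ^ s) := by omega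
        rw [hre, Nat.add_mod_right]
        exact Nat.mod_eq_of_lt i.isLt
      · intro x j hj
        have hjv : (j : ℕ) < 2 ^ s := j.isLt
        simp only [Equiv.coe_fn_mk, Fin.val_mk]
        rw [show ((⟨(j : ℕ), hj⟩ : Fin (s + 2 ^ s)) : ℕ) = (j : ℕ) from rfl]
        rw [circ_eval]
        rw [stFun_mid s x (2 ^ s - 1) _
          (by simp only [Fin.val_mk]; rw [Nat.mod_eq_of_lt (by omega)]; omega)
          (by simp only [Fin.val_mk]; rw [Nat.mod_eq_of_lt (by omega)]; omega)
          j (by simp only [Fin.val_mk]; rw [Nat.mod_eq_of_lt (by omega)]; omega)]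
  · have hfun : ∀ s : ℕ, (((circ s).L : ℝ)) / (2 : ℝ) ^ (s + 1)
        = 1 - (1 / 2 : ℝ) ^ s := by
      intro s
      have h2s : (1 : ℕ) ≤ 2 ^ s := Nat.one_le_two_pow
      rw [circ_length]
      have h1 : ((2 * (2 ^ s - 1) : ℕ) : ℝ) = 2 * (2 : ℝ) ^ s - 2 := by
        rw [Nat.cast_mul, Nat.cast_sub h2s]
        push_cast
        ring
      rw [h1]
      have h2 : (2 : ℝ) ^ (s + 1) ≠ 0 := by positivity
      field_simp
      have hX : (1 / 2 : ℝ) ^ s * 2 ^ s = 1 := by rw [← mul_pow]; norm_num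
      linear_combination 2 * hX
    unfold AsympEquiv
    simp only [hfun]
    have hT : Tendsto (fun s : ℕ => 1 - (1 / 2 : ℝ) ^ s) atTop (nhds (1 - 0)) :=
      tendsto_const_nhds.sub
        (tendsto_pow_atTop_nhds_zero_of_lt_one (by norm_num) (by norm_num))
    simpa using hT
  · unfold AsympEquiv
    have hfun : ∀ s : ℕ, (((2 ^ s : ℕ) : ℝ)) / (2 : ℝ) ^ s = 1 := by
      intro s
      rw [div_eq_one_iff_eq (by positivity)]
      push_cast
      ring
    simp only [hfun]
    exact tendsto_const_nhds


end Rev
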